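/- There is a universal constant C > 0 such that for all a, b in the closed unit disc of ℂ, the integral over the open unit disc 𝔻 of |a − b| / (|s − a|·|s − b|) with respect to Lebesgue measure ds is at most C·φ(|a − b|), where φ(x) = x·max(−ln x, 1), φ(0)=0. -/

import Mathlib

open MeasureTheory Set Real

open scoped Real

noncomputable def phi (x : ℝ) : ℝ := x * max (-Real.log x) 1

/-- Integrability criterion via polar coordinates in `ℝ × ℝ`. -/
theorem integrable_of_integrableOn_polarCoord_target (f : ℝ × ℝ → ℝ)
    (h : IntegrableOn (fun p : ℝ × ℝ => |p.1| * f (polarCoord.symm p)) polarCoord.target) :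
    Integrable f := by
  set B : ℝ × ℝ → ℝ × ℝ →L[ℝ] ℝ × ℝ := fun p =>
    LinearMap.toContinuousLinearMap (Matrix.toLin (Module.Basis.finTwoProd ℝ) (Module.Basis.finTwoProd ℝ)
      !![Real.cos p.2, -p.1 * Real.sin p.2; Real.sin p.2, p.1 * Real.cos p.2])
  have A : ∀ p ∈ polarCoord.target, HasFDerivWithinAt polarCoord.symm (B p)
      polarCoord.target p := fun p _ =>
    (hasFDerivAt_polarCoord_symm p).hasFDerivWithinAt
  have B_det : ∀ p, (B p).det = p.1 := by
    intro p
    conv_rhs => rw [← one_mul p.1, ← Real.cos_sq_add_sin_sq p.2]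
    simp only [B, neg_mul, LinearMap.det_toContinuousLinearMap, LinearMap.det_toLin,
      Matrix.det_fin_two_of, sub_neg_eq_add]
    ring
  have hinj : Set.InjOn polarCoord.symm polarCoord.target := by
    have := polarCoord.symm.injOn
    rwa [OpenPartialHomeomorph.symm_source] at this
  have himg : polarCoord.symm '' polarCoord.target = polarCoord.source :=
    polarCoord.symm_image_target_eq_source
  have key : IntegrableOn f polarCoord.source := by
    rw [← himg]
    rw [integrableOn_image_iff_integrableOn_abs_det_fderiv_smul volume
      polarCoord.open_target.measurableSet A hinj f]
    apply h.congr_fun _ polarCoord.open_target.measurableSet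
    intro p _
    simp [B_det, smul_eq_mul]
  have : IntegrableOn f (univ : Set (ℝ × ℝ)) := by
    apply key.congr_set_ae
    exact polarCoord_source_ae_eq_univ.symm
  rwa [integrableOn_univ] at this

/-- Integrability of radial functions on `ℂ`. -/
theorem integrable_radial {f : ℝ → ℝ}
    (h : IntegrableOn (fun r => r * f r) (Ioi (0 : ℝ))) :
    Integrable (fun z : ℂ => f (‖z‖)) := by
  have hprod : IntegrableOn (fun p : ℝ × ℝ => p.1 * f p.1) polarCoord.target := by
    have h1 : Integrable (fun p : ℝ × ℝ => (p.1 * f p.1) * 1)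
        ((volume.restrict (Ioi (0 : ℝ))).prod (volume.restrict (Ioo (-π) π))) := by
      have hc : Integrable (fun _ : ℝ => (1 : ℝ)) (volume.restrict (Ioo (-π) π)) := by
        rw [integrable_const_iff]
        right
        exact isFiniteMeasure_restrict.2 (by simp [Real.volume_Ioo])
      exact h.mul_prod hc
    simp only [mul_one] at h1
    rwa [Measure.prod_restrict, ← Measure.volume_eq_prod, ← polarCoord_target] at h1
  have hG : Integrable (fun p : ℝ × ℝ => f (‖Complex.measurableEquivRealProd.symm p‖)) := by
    apply integrable_of_integrableOn_polarCoord_target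
    apply hprod.congr_fun _ polarCoord.open_target.measurableSet
    intro p hp
    have hp1 : 0 < p.1 := by
      rw [polarCoord_target] at hp
      exact hp.1
    have habs : ‖Complex.measurableEquivRealProd.symm (polarCoord.symm p)‖ = |p.1| := by
      have h2 := Complex.norm_polarCoord_symm p
      rw [← h2]
      rfl
    show p.1 * f p.1 = |p.1| * f (‖Complex.measurableEquivRealProd.symm (polarCoord.symm p)‖)
    rw [habs, abs_of_pos hp1]
  have := (Complex.volume_preserving_equiv_real_prod.symm).integrable_comp_emb
    Complex.measurableEquivRealProd.symm.measurableEmbedding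
    (g := fun z : ℂ => f (‖z‖))
  rw [← this]
  exact hG

/-- Value of integrals of radial functions on `ℂ`. -/
theorem integral_radial (f : ℝ → ℝ) :
    (∫ z : ℂ, f (‖z‖)) = (2 * π) * ∫ r in Ioi (0 : ℝ), r * f r := by
  rw [← Complex.integral_comp_polarCoord_symm (fun z => f (‖z‖))]
  have heq : EqOn (fun p : ℝ × ℝ => p.1 • f (‖Complex.polarCoord.symm p‖))
      (fun p : ℝ × ℝ => (p.1 * f p.1) * 1) polarCoord.target := by
    intro p hp
    rw [polarCoord_target] at hp
    have hp1 : 0 < p.1 := hp.1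
    simp only [smul_eq_mul, mul_one]
    rw [Complex.norm_polarCoord_symm, abs_of_pos hp1]
  rw [setIntegral_congr_fun polarCoord.open_target.measurableSet heq]
  rw [polarCoord_target, Measure.volume_eq_prod, ← Measure.prod_restrict]
  rw [integral_prod_mul (fun r : ℝ => r * f r) (fun _ : ℝ => (1 : ℝ))]
  rw [integral_const]
  rw [measureReal_def, Measure.restrict_apply_univ, Real.volume_Ioo]
  rw [ENNReal.toReal_ofReal (by linarith [Real.pi_pos])]
  simp only [smul_eq_mul, mul_one]
  ring

section OneDim

variable {R : ℝ}

theorem f1_eqOn (hR : 0 < R) :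
    EqOn (fun r : ℝ => r * (Iio R).indicator (fun t : ℝ => t⁻¹) r)
      ((Ioo (0 : ℝ) R).indicator (fun _ => (1 : ℝ))) (Ioi (0 : ℝ)) := by
  intro r hr
  simp only [mem_Ioi] at hr
  simp only [Set.indicator_apply, mem_Iio, mem_Ioo]
  by_cases h : r < R
  · simp [h, hr, mul_inv_cancel₀ hr.ne']
  · simp [h]

theorem f1_integrableOn (hR : 0 < R) :
    IntegrableOn (fun r : ℝ => r * (Iio R).indicator (fun t : ℝ => t⁻¹) r) (Ioi (0 : ℝ)) := by
  have h1 : IntegrableOn ((Ioo (0 : ℝ) R).indicator (fun _ => (1 : ℝ))) (Ioi (0 : ℝ)) := by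
    apply Integrable.integrableOn
    rw [integrable_indicator_iff measurableSet_Ioo]
    exact integrableOn_const (by simp [Real.volume_Ioo])
  exact h1.congr_fun (f1_eqOn hR).symm measurableSet_Ioi

theorem f1_integral (hR : 0 < R) :
    ∫ r in Ioi (0 : ℝ), r * (Iio R).indicator (fun t : ℝ => t⁻¹) r = R := by
  rw [setIntegral_congr_fun measurableSet_Ioi (f1_eqOn hR)]
  rw [integral_indicator measurableSet_Ioo, Measure.restrict_restrict measurableSet_Ioo]
  rw [Set.inter_eq_self_of_subset_left (fun x hx => hx.1)]
  simp [Real.volume_Ioo, hR.le]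

theorem f3_eqOn (hR : 0 < R) :
    EqOn (fun r : ℝ => r * (Ico R 2).indicator (fun t : ℝ => (t ^ 2)⁻¹) r)
      ((Ico R 2).indicator (fun t : ℝ => t⁻¹)) (Ioi (0 : ℝ)) := by
  intro r hr
  simp only [mem_Ioi] at hr
  simp only [Set.indicator_apply]
  by_cases h : r ∈ Ico R 2
  · simp only [if_pos h]
    have hr0 : r ≠ 0 := hr.ne'
    field_simp
  · simp only [if_neg h, mul_zero]

theorem f3_inv_integrableOn (hR : 0 < R) :
    IntegrableOn (fun t : ℝ => t⁻¹) (Ico R 2) := by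
  apply IntegrableOn.mono_set _ Set.Ico_subset_Icc_self
  apply ContinuousOn.integrableOn_Icc
  apply ContinuousOn.inv₀ continuousOn_id
  intro x hx
  have := hR.trans_le hx.1
  positivity

theorem f3_integrableOn (hR : 0 < R) :
    IntegrableOn (fun r : ℝ => r * (Ico R 2).indicator (fun t : ℝ => (t ^ 2)⁻¹) r)
      (Ioi (0 : ℝ)) := by
  have h1 : IntegrableOn ((Ico R 2).indicator (fun t : ℝ => t⁻¹)) (Ioi (0 : ℝ)) := by
    apply Integrable.integrableOn
    rw [integrable_indicator_iff measurableSet_Ico]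
    exact f3_inv_integrableOn hR
  exact h1.congr_fun (f3_eqOn hR).symm measurableSet_Ioi

theorem f3_integral (hR : 0 < R) (hR2 : R ≤ 2) :
    ∫ r in Ioi (0 : ℝ), r * (Ico R 2).indicator (fun t : ℝ => (t ^ 2)⁻¹) r
      = Real.log (2 / R) := by
  rw [setIntegral_congr_fun measurableSet_Ioi (f3_eqOn hR)]
  rw [integral_indicator measurableSet_Ico, Measure.restrict_restrict measurableSet_Ico]
  have hsub : Ico R 2 ⊆ Ioi (0 : ℝ) := fun x hx => hR.trans_le hx.1
  rw [Set.inter_eq_self_of_subset_left hsub]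
  rw [integral_Ico_eq_integral_Ioo, ← integral_Ioc_eq_integral_Ioo,
    ← intervalIntegral.integral_of_le hR2, integral_inv]
  rw [Set.uIcc_of_le hR2]
  intro h
  exact absurd h.1 (by linarith)

end OneDim

set_option maxHeartbeats 2000000 in
theorem disc_integral_phi_bound :
    ∃ C : ℝ, 0 < C ∧ ∀ a b : ℂ, ‖a‖ ≤ 1 → ‖b‖ ≤ 1 →
      (∫ s in {s : ℂ | ‖s‖ < 1},
          ‖a - b‖ / (‖s - a‖ * ‖s - b‖))
        ≤ C * phi (‖a - b‖) := by
  refine ⟨40, by norm_num, fun a b ha hb => ?_⟩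
  set d := ‖a - b‖ with hd
  have hd0 : 0 ≤ d := norm_nonneg _
  rcases eq_or_lt_of_le hd0 with h0 | hdpos
  · rw [← h0]
    simp [phi]
  -- main case : 0 < d
  have hd2 : d ≤ 2 := by
    have h1 : ‖a - b‖ ≤ ‖a‖ + ‖b‖ := by
      simpa using norm_sub_le a b
    rw [hd]; linarith
  set R := d / 2 with hR
  have hRpos : 0 < R := by rw [hR]; linarith
  have hR1 : R ≤ 1 := by rw [hR]; linarith
  set f₁ : ℝ → ℝ := (Iio R).indicator (fun t : ℝ => t⁻¹) with hf₁
  set f₃ : ℝ → ℝ := (Ico R 2).indicator (fun t : ℝ => (t ^ 2)⁻¹) with hf₃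
  -- nonnegativity of the radial pieces
  have hf₁nonneg : ∀ r : ℝ, 0 ≤ r → 0 ≤ f₁ r := by
    intro r hr
    rw [hf₁]
    by_cases h : r ∈ Iio R
    · rw [Set.indicator_of_mem h]; positivity
    · rw [Set.indicator_of_notMem h]
  have hf₃nonneg : ∀ r : ℝ, 0 ≤ f₃ r := by
    intro r
    rw [hf₃]
    by_cases h : r ∈ Ico R 2
    · rw [Set.indicator_of_mem h]; positivity
    · rw [Set.indicator_of_notMem h]
  set G : ℂ → ℝ := fun s => 2 * f₁ (‖s - a‖) + 2 * f₁ (‖s - b‖)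
    + R * (f₃ (‖s - a‖) + f₃ (‖s - b‖)) with hG
  have hGnonneg : ∀ s : ℂ, 0 ≤ G s := by
    intro s
    rw [hG]
    have n1 := hf₁nonneg _ (norm_nonneg (s - a))
    have n2 := hf₁nonneg _ (norm_nonneg (s - b))
    have n3 := hf₃nonneg (‖s - a‖)
    have n4 := hf₃nonneg (‖s - b‖)
    positivity
  -- integrability of the pieces
  have hint1 : Integrable (fun z : ℂ => f₁ (‖z‖)) :=
    integrable_radial (f1_integrableOn hRpos)
  have hint3 : Integrable (fun z : ℂ => f₃ (‖z‖)) :=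
    integrable_radial (f3_integrableOn hRpos)
  have hint1a : Integrable (fun s : ℂ => f₁ (‖s - a‖)) := hint1.comp_sub_right a
  have hint1b : Integrable (fun s : ℂ => f₁ (‖s - b‖)) := hint1.comp_sub_right b
  have hint3a : Integrable (fun s : ℂ => f₃ (‖s - a‖)) := hint3.comp_sub_right a
  have hint3b : Integrable (fun s : ℂ => f₃ (‖s - b‖)) := hint3.comp_sub_right b
  have hGint : Integrable G := by
    rw [hG]
    exact ((hint1a.const_mul 2).add (hint1b.const_mul 2)).add
      ((hint3a.add hint3b).const_mul R)
  -- pointwise bound on the disc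
  have hbound : ∀ s ∈ {s : ℂ | ‖s‖ < 1},
      d / (‖s - a‖ * ‖s - b‖) ≤ G s := by
    intro s hs
    simp only [Set.mem_setOf_eq] at hs
    set x := ‖s - a‖ with hx
    set y := ‖s - b‖ with hy
    have hx0 : 0 ≤ x := norm_nonneg _
    have hy0 : 0 ≤ y := norm_nonneg _
    have hx2 : x < 2 := by
      have h1 : ‖s - a‖ ≤ ‖s‖ + ‖a‖ := by
        simpa using norm_sub_le s a
      rw [hx]; linarith
    have hy2 : y < 2 := by
      have h1 : ‖s - b‖ ≤ ‖s‖ + ‖b‖ := by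
        simpa using norm_sub_le s b
      rw [hy]; linarith
    have hxy : d ≤ x + y := by
      have h1 : ‖a - b‖ ≤ ‖a - s‖ + ‖s - b‖ :=
        norm_sub_le_norm_sub_add_norm_sub a s b
      have h2 : ‖a - s‖ = ‖s - a‖ := norm_sub_rev a s
      rw [hd, hx, hy]
      rw [h2] at h1
      exact h1
    have hn1 : 0 ≤ f₁ x := hf₁nonneg x hx0
    have hn2 : 0 ≤ f₁ y := hf₁nonneg y hy0
    have hn3 : 0 ≤ f₃ x := hf₃nonneg x
    have hn4 : 0 ≤ f₃ y := hf₃nonneg y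
    have hGs : G s = 2 * f₁ x + 2 * f₁ y + R * (f₃ x + f₃ y) := by rw [hG]
    rw [hGs]
    have hn5 : 0 ≤ R * (f₃ x + f₃ y) := mul_nonneg hRpos.le (by linarith)
    have hRd : d = 2 * R := by rw [hR]; ring
    clear_value x y
    clear hx hy
    clear_value R d
    rcases lt_or_ge x R with hxR | hxR
    · -- x < R, so y ≥ R
      have hyR : R ≤ y := by linarith
      have hf1x : f₁ x = x⁻¹ := by
        rw [hf₁, Set.indicator_of_mem (Set.mem_Iio.mpr hxR)]
      rcases eq_or_lt_of_le hx0 with hx00 | hx00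
      · have hz : d / (x * y) = 0 := by rw [← hx00, zero_mul, div_zero]
        rw [hz]
        linarith
      · have key : d / (x * y) ≤ 2 * x⁻¹ := by
          rw [div_le_iff₀ (mul_pos hx00 (lt_of_lt_of_le hRpos hyR))]
          have hmm : 2 * x⁻¹ * (x * y) = 2 * y := by field_simp
          rw [hmm, hRd]
          nlinarith
        rw [hf1x]
        linarith
    rcases lt_or_ge y R with hyR | hyR
    · -- y < R, so x ≥ R
      have hf1y : f₁ y = y⁻¹ := by
        rw [hf₁, Set.indicator_of_mem (Set.mem_Iio.mpr hyR)]
      rcases eq_or_lt_of_le hy0 with hy00 | hy00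
      · have hz : d / (x * y) = 0 := by rw [← hy00, mul_zero, div_zero]
        rw [hz]
        linarith
      · have key : d / (x * y) ≤ 2 * y⁻¹ := by
          rw [div_le_iff₀ (mul_pos (by linarith : (0:ℝ) < x) hy00)]
          have hmm : 2 * y⁻¹ * (x * y) = 2 * x := by field_simp
          rw [hmm, hRd]
          nlinarith
        rw [hf1y]
        linarith
    · -- middle region
      have hxpos : 0 < x := lt_of_lt_of_le hRpos hxR
      have hypos : 0 < y := lt_of_lt_of_le hRpos hyR
      have hf3x : f₃ x = (x ^ 2)⁻¹ := by
        rw [hf₃, Set.indicator_of_mem (Set.mem_Ico.mpr ⟨hxR, hx2⟩)]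
      have hf3y : f₃ y = (y ^ 2)⁻¹ := by
        rw [hf₃, Set.indicator_of_mem (Set.mem_Ico.mpr ⟨hyR, hy2⟩)]
      have key : d / (x * y) ≤ R * ((x ^ 2)⁻¹ + (y ^ 2)⁻¹) := by
        rw [div_le_iff₀ (mul_pos hxpos hypos)]
        have hexp : R * ((x ^ 2)⁻¹ + (y ^ 2)⁻¹) * (x * y) = R * (y / x + x / y) := by
          field_simp
        rw [hexp, hRd]
        have hamgm : 2 ≤ y / x + x / y := by
          rw [div_add_div _ _ hxpos.ne' hypos.ne', le_div_iff₀ (by positivity)]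
          nlinarith [sq_nonneg (x - y)]
        nlinarith
      rw [hf3x, hf3y]
      linarith
  -- measurability of the disc
  have hmeasS : MeasurableSet {s : ℂ | ‖s‖ < 1} := by
    have h1 : {s : ℂ | ‖s‖ < 1} = Metric.ball (0 : ℂ) 1 := by
      ext s
      simp [Metric.mem_ball, Complex.dist_eq]
    rw [h1]
    exact measurableSet_ball
  -- chain of inequalities
  have step1 : (∫ s in {s : ℂ | ‖s‖ < 1},
      d / (‖s - a‖ * ‖s - b‖)) ≤
      ∫ s in {s : ℂ | ‖s‖ < 1}, G s := by
    apply integral_mono_of_nonneg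
    · exact ae_of_all _ fun s => by positivity
    · exact hGint.restrict
    · exact (ae_restrict_iff' hmeasS).2 (ae_of_all _ hbound)
  have step2 : (∫ s in {s : ℂ | ‖s‖ < 1}, G s) ≤ ∫ s, G s :=
    setIntegral_le_integral hGint (ae_of_all _ hGnonneg)
  set L := Real.log (2 / R) with hL
  have hint1val : (∫ z : ℂ, f₁ (‖z‖)) = 2 * π * R := by
    rw [hf₁, integral_radial, f1_integral hRpos]
  have hint3val : (∫ z : ℂ, f₃ (‖z‖)) = 2 * π * L := by
    rw [hf₃, integral_radial, f3_integral hRpos (by linarith), hL]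
  have step3 : (∫ s, G s) = 2 * (2 * π * R) + 2 * (2 * π * R) + R * (2 * π * L + 2 * π * L) := by
    rw [hG]
    have i1 : Integrable (fun s : ℂ => 2 * f₁ (‖s - a‖)) := hint1a.const_mul 2
    have i2 : Integrable (fun s : ℂ => 2 * f₁ (‖s - b‖)) := hint1b.const_mul 2
    have i3 : Integrable (fun s : ℂ => f₃ (‖s - a‖) + f₃ (‖s - b‖)) :=
      hint3a.add hint3b
    have i4 : Integrable
        (fun s : ℂ => R * (f₃ (‖s - a‖) + f₃ (‖s - b‖))) :=
      i3.const_mul R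
    have i12 : Integrable
        (fun s : ℂ => 2 * f₁ (‖s - a‖) + 2 * f₁ (‖s - b‖)) :=
      i1.add i2
    rw [integral_add i12 i4]
    rw [integral_add i1 i2]
    rw [integral_const_mul, integral_const_mul, integral_const_mul]
    rw [integral_add hint3a hint3b]
    rw [integral_sub_right_eq_self (fun z : ℂ => f₁ (‖z‖)) a]
    rw [integral_sub_right_eq_self (fun z : ℂ => f₁ (‖z‖)) b]
    rw [integral_sub_right_eq_self (fun z : ℂ => f₃ (‖z‖)) a]
    rw [integral_sub_right_eq_self (fun z : ℂ => f₃ (‖z‖)) b]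
    rw [hint1val, hint3val]
  -- final arithmetic
  set M := max (-Real.log d) 1 with hM
  have hM1 : (1 : ℝ) ≤ M := le_max_right _ _
  have hMlog : -Real.log d ≤ M := le_max_left _ _
  have hLbound : L ≤ 3 * M := by
    rw [hL, hR, Real.log_div (by norm_num) (by positivity)]
    have hlog2 : Real.log 2 ≤ 1 := by
      have h1 := Real.log_le_sub_one_of_pos (by norm_num : (0:ℝ) < 2)
      linarith
    have hlogd : Real.log (d / 2) = Real.log d - Real.log 2 :=
      Real.log_div hdpos.ne' (by norm_num)
    rw [hlogd]
    linarith
  have hphi : phi d = d * M := by rw [phi, hM]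
  have hpi4 : π ≤ 4 := Real.pi_le_four
  have hpipos : 0 < π := Real.pi_pos
  have hfinal : 2 * (2 * π * R) + 2 * (2 * π * R) + R * (2 * π * L + 2 * π * L)
      ≤ 40 * (d * M) := by
    have hRd : R = d / 2 := hR
    have hdM : 0 ≤ d * M := mul_nonneg hd0 (by linarith)
    have h2 : 2 * π * d * L ≤ 2 * π * d * (3 * M) :=
      mul_le_mul_of_nonneg_left hLbound (by positivity)
    have h3 : 4 * π * d * 1 ≤ 4 * π * d * M :=
      mul_le_mul_of_nonneg_left hM1 (by positivity)
    have h5 : π * (d * M) ≤ 4 * (d * M) := mul_le_mul_of_nonneg_right hpi4 hdM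
    clear_value d M L R
    rw [hRd]
    nlinarith [h2, h3, h5]
  calc (∫ s in {s : ℂ | ‖s‖ < 1},
        d / (‖s - a‖ * ‖s - b‖))
      ≤ ∫ s, G s := le_trans step1 step2
    _ = 2 * (2 * π * R) + 2 * (2 * π * R) + R * (2 * π * L + 2 * π * L) := step3
    _ ≤ 40 * (d * M) := hfinal
    _ = 40 * phi d := by rw [hphi]
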